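/- Let n ≥ 2 and let F be an arbitrary field. Then the F-vector space of inner derivations of the dicyclic group algebra F T_{4n} has dimension 3(n−1) over F. -/

import Mathlib

open MonoidAlgebra

/-- The `F`-linear map sending `β ∈ FG` to the inner derivation
`d_β : α ↦ α * β - β * α` of the group algebra `FG`. -/
noncomputable def innerDerivMap (F G : Type*) [Field F] [Group G] :
    MonoidAlgebra F G →ₗ[F] Module.End F (MonoidAlgebra F G) where
  toFun β :=
    { toFun := fun α => α * β - β * α
      map_add' := by intro x y; noncomm_ring
      map_smul' := by intro c x; simp [smul_mul_assoc, mul_smul_comm, smul_sub] }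
  map_add' := by
    intro β γ; refine LinearMap.ext fun α => ?_
    simp only [LinearMap.coe_mk, AddHom.coe_mk, LinearMap.add_apply]
    noncomm_ring
  map_smul' := by
    intro c β; refine LinearMap.ext fun α => ?_
    simp [smul_mul_assoc, mul_smul_comm, smul_sub]

lemma mem_ker_innerDerivMap_iff (F G : Type*) [Field F] [Group G] (β : MonoidAlgebra F G) :
    β ∈ LinearMap.ker (innerDerivMap F G) ↔ ∀ g x : G, β.coeff (g * x * g⁻¹) = β.coeff x := by
  constructor
  · intro h g x
    have h1 : MonoidAlgebra.single g (1:F) * β - β * MonoidAlgebra.single g 1 = 0 := by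
      have := LinearMap.congr_fun (LinearMap.mem_ker.mp h) (MonoidAlgebra.single g 1)
      simpa [innerDerivMap] using this
    have h2 := congrFun (congrArg (fun z => ⇑(MonoidAlgebra.coeff z)) (sub_eq_zero.mp h1)) (g * x)
    simpa [MonoidAlgebra.single_mul_apply, MonoidAlgebra.mul_single_apply, mul_assoc] using h2.symm
  · intro h
    rw [LinearMap.mem_ker]
    refine LinearMap.ext fun α => ?_
    show α * β - β * α = 0
    rw [sub_eq_zero]
    induction α using MonoidAlgebra.induction_on with
    | of g =>
      rw [MonoidAlgebra.of_apply]
      refine MonoidAlgebra.ext (Finsupp.ext fun y => ?_)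
      rw [MonoidAlgebra.single_mul_apply, MonoidAlgebra.mul_single_apply, one_mul, mul_one]
      have := h g⁻¹ (y * g⁻¹)
      simpa [mul_assoc] using this
    | add f g hf hg => rw [add_mul, mul_add, hf, hg]
    | smul r f hf => rw [smul_mul_assoc, mul_smul_comm, hf]

section
variable (F G : Type*) [Field F] [Group G]

/-- The linear map sending an element of the kernel of `innerDerivMap` (i.e. a central element
of the group algebra) to the induced function on conjugacy classes. -/
noncomputable def kerToClassFun :
    LinearMap.ker (innerDerivMap F G) →ₗ[F] (ConjClasses G → F) where
  toFun β c := Quotient.liftOn c (fun x => β.1.coeff x) (by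
    intro x y hxy
    obtain ⟨g, hg⟩ := isConj_iff.mp hxy
    have := (mem_ker_innerDerivMap_iff F G β.1).mp β.2 g x
    rw [hg] at this
    exact this.symm)
  map_add' β γ := by
    funext c
    induction c using Quotient.ind
    rfl
  map_smul' r β := by
    funext c
    induction c using Quotient.ind
    rfl

lemma kerToClassFun_bijective [Finite G] : Function.Bijective (kerToClassFun F G) := by
  constructor
  · intro β γ h
    ext x
    exact congrFun h (ConjClasses.mk x)
  · intro f
    refine ⟨⟨MonoidAlgebra.ofCoeff (Finsupp.equivFunOnFinite.symm (fun g => f (ConjClasses.mk g))), ?_⟩, ?_⟩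
    · rw [mem_ker_innerDerivMap_iff]
      intro g x
      show f (ConjClasses.mk (g * x * g⁻¹)) = f (ConjClasses.mk x)
      congr 1
      rw [ConjClasses.mk_eq_mk_iff_isConj]
      exact isConj_iff.mpr ⟨g⁻¹, by group⟩
    · funext c
      induction c using Quotient.ind
      rfl

lemma finrank_ker_innerDerivMap [Finite G] :
    Module.finrank F (LinearMap.ker (innerDerivMap F G)) = Nat.card (ConjClasses G) := by
  classical
  cases nonempty_fintype G
  rw [(LinearEquiv.ofBijective _ (kerToClassFun_bijective F G)).finrank_eq,
    Module.finrank_pi, Nat.card_eq_fintype_card]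

end

section Count
variable {n : ℕ}

lemma zmod_add_self_eq_zero_iff (hn : 0 < n) (i : ZMod (2 * n)) :
    i + i = 0 ↔ i = 0 ∨ i = (n : ZMod (2 * n)) := by
  haveI : NeZero (2 * n) := ⟨by omega⟩
  constructor
  · intro h
    have hv : ((i.val : ℕ) : ZMod (2 * n)) = i := by
      simp [ZMod.natCast_val, ZMod.cast_id]
    have h' : ((i.val + i.val : ℕ) : ZMod (2 * n)) = 0 := by push_cast [hv]; exact h
    have hdvd : (2 * n) ∣ (i.val + i.val) := by
      rwa [ZMod.natCast_eq_zero_iff] at h'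
    have hlt : i.val < 2 * n := ZMod.val_lt i
    obtain ⟨k, hk⟩ := hdvd
    have hk2 : k < 2 := by nlinarith
    interval_cases k
    · left
      have : i.val = 0 := by omega
      rw [← hv, this]; simp
    · right
      have : i.val = n := by omega
      rw [← hv, this]
  · rintro (rfl | rfl)
    · simp
    · rw [← Nat.cast_add]
      have : ((n + n : ℕ) : ZMod (2 * n)) = (((2 * n : ℕ)) : ZMod (2 * n)) := by ring_nf
      rw [this, ZMod.natCast_self]

lemma ncast_ne_zero (hn : 2 ≤ n) : ((n : ZMod (2 * n))) ≠ 0 := by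
  haveI : NeZero (2 * n) := ⟨by omega⟩
  intro h
  rw [ZMod.natCast_eq_zero_iff] at h
  have := Nat.le_of_dvd (by omega) h
  omega

/-- The 2-torsion subtype of `ZMod (2 * n)`. -/
abbrev Tors (n : ℕ) := {i : ZMod (2 * n) // i + i = 0}

def torsEquivBool (hn : 2 ≤ n) : Tors n ≃ Bool where
  toFun i := decide (i.1 = (n : ZMod (2 * n)))
  invFun b := if b then ⟨n, (zmod_add_self_eq_zero_iff (by omega) _).mpr (Or.inr rfl)⟩
    else ⟨0, by simp⟩
  left_inv i := by
    rcases (zmod_add_self_eq_zero_iff (by omega) i.1).mp i.2 with h | h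
    · have hne : i.1 ≠ (n : ZMod (2 * n)) := by rw [h]; exact fun hh => ncast_ne_zero hn hh.symm
      simp only [hne, decide_eq_false_iff_not.mpr hne, if_false]
      exact Subtype.ext h.symm
    · simp only [h, decide_eq_true_eq, if_pos rfl, decide_true]
      exact Subtype.ext h.symm
  right_inv b := by
    cases b
    · simp [ncast_ne_zero hn, Ne.symm (ncast_ne_zero hn)]
    · simp

lemma card_tors (hn : 2 ≤ n) : Nat.card (Tors n) = 2 := by
  rw [Nat.card_congr (torsEquivBool hn)]; simp

open QuaternionGroup in
/-- Explicit parametrisation of the commuting pairs in the quaternion group. -/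
def commEquiv (hn : 2 ≤ n) :
    {p : QuaternionGroup n × QuaternionGroup n // Commute p.1 p.2} ≃
      (ZMod (2*n) × ZMod (2*n)) ⊕ (Tors n × ZMod (2*n)) ⊕ (Tors n × ZMod (2*n)) ⊕
        (ZMod (2*n) × Tors n) where
  toFun := fun
    | ⟨⟨a i, a j⟩, _⟩ => .inl (i, j)
    | ⟨⟨a i, xa j⟩, h⟩ => .inr (.inl (⟨i, by
        have h2 := xa.inj (h : xa (j - i) = xa (j + i))
        linear_combination -h2⟩, j))
    | ⟨⟨xa i, a j⟩, h⟩ => .inr (.inr (.inl (⟨j, by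
        have h2 := xa.inj (h : xa (i + j) = xa (i - j))
        linear_combination h2⟩, i)))
    | ⟨⟨xa i, xa j⟩, h⟩ => .inr (.inr (.inr (i, ⟨j - i, by
        have h2 := a.inj (h : a ((n : ZMod (2*n)) + j - i) = a ((n : ZMod (2*n)) + i - j))
        linear_combination h2⟩)))
  invFun := fun
    | .inl (i, j) => ⟨(a i, a j), congrArg a (add_comm i j)⟩
    | .inr (.inl (s, j)) => ⟨(a s.1, xa j), congrArg xa (by linear_combination -s.2)⟩
    | .inr (.inr (.inl (s, i))) => ⟨(xa i, a s.1), congrArg xa (by linear_combination s.2)⟩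
    | .inr (.inr (.inr (i, s))) => ⟨(xa i, xa (i + s.1)), congrArg a (by linear_combination s.2)⟩
  left_inv := fun
    | ⟨⟨a i, a j⟩, _⟩ => rfl
    | ⟨⟨a i, xa j⟩, h⟩ => rfl
    | ⟨⟨xa i, a j⟩, h⟩ => rfl
    | ⟨⟨xa i, xa j⟩, h⟩ => Subtype.ext (by
        show (xa i, xa (i + (j - i))) = (xa i, xa j)
        congr 1
        exact congrArg xa (by ring))
  right_inv := fun
    | .inl (i, j) => rfl
    | .inr (.inl (s, j)) => rfl
    | .inr (.inr (.inl (s, i))) => rfl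
    | .inr (.inr (.inr (i, s))) => by
        have hs : i + s.1 - i = s.1 := by ring
        simp only [hs]

lemma card_conjClasses_quaternion (hn : 2 ≤ n) :
    Nat.card (ConjClasses (QuaternionGroup n)) = n + 3 := by
  haveI : NeZero n := ⟨by omega⟩
  have h1 := card_comm_eq_card_conjClasses_mul_card (QuaternionGroup n)
  rw [Nat.card_congr (commEquiv hn)] at h1
  simp only [Nat.card_sum, Nat.card_prod, Nat.card_zmod, card_tors hn] at h1
  have hG : Nat.card (QuaternionGroup n) = 4 * n := by
    rw [Nat.card_eq_fintype_card, QuaternionGroup.card]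
  rw [hG] at h1
  have h2 : Nat.card (ConjClasses (QuaternionGroup n)) * (4 * n) = (n + 3) * (4 * n) := by
    rw [← h1]; ring
  exact Nat.eq_of_mul_eq_mul_right (by omega) h2

end Count

/-- For any field `F`, the space of inner derivations of the dicyclic group
algebra `F T_{4n}` has dimension `3(n-1)`. -/
theorem finrank_innerDerivations_quaternion (F : Type*) [Field F] (n : ℕ) (hn : 2 ≤ n) :
    Module.finrank F (LinearMap.range (innerDerivMap F (QuaternionGroup n))) =
      3 * (n - 1) := by
  haveI : NeZero n := ⟨by omega⟩
  have e : (MonoidAlgebra F (QuaternionGroup n)) ≃ₗ[F] (QuaternionGroup n → F) :=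
    (MonoidAlgebra.coeffLinearEquiv F).trans (Finsupp.linearEquivFunOnFinite F F _)
  haveI : Module.Finite F (MonoidAlgebra F (QuaternionGroup n)) := Module.Finite.equiv e.symm
  have htot : Module.finrank F (MonoidAlgebra F (QuaternionGroup n)) = 4 * n := by
    rw [e.finrank_eq, Module.finrank_pi, QuaternionGroup.card]
  have hrn := LinearMap.finrank_range_add_finrank_ker (innerDerivMap F (QuaternionGroup n))
  rw [htot, finrank_ker_innerDerivMap, card_conjClasses_quaternion hn] at hrn
  omega
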